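/- For every cardinal κ > 2 (finite or infinite), the partition lattice of κ is not orthocomplemented: there is no map P ↦ P⊥ on partitions of κ satisfying P ∧ P⊥ = ⊥, P ∨ P⊥ = ⊤, (P ∧ Q)⊥ = P⊥ ∨ Q⊥, and (P⊥)⊥ = P. -/

import Mathlib

open Cardinal

namespace Stmt19Aux

universe u
variable {α : Type u}

/-- The two-block partition with blocks `S` and `Sᶜ` (trivial if `S = ∅` or `S = univ`). -/
def cpart (S : Set α) : Setoid α :=
  ⟨fun a b => (a ∈ S ↔ b ∈ S), ⟨fun _ => Iff.rfl, Iff.symm, Iff.trans⟩⟩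

lemma cpart_rel {S : Set α} {a b : α} : cpart S a b ↔ (a ∈ S ↔ b ∈ S) := Iff.rfl

/-- The atomic partition joining exactly `x` and `y`. -/
def pairS (x y : α) : Setoid α :=
  ⟨fun a b => a = b ∨ (a = x ∧ b = y) ∨ (a = y ∧ b = x),
   ⟨fun _ => Or.inl rfl,
    by rintro a b (rfl | ⟨rfl, rfl⟩ | ⟨rfl, rfl⟩) <;> tauto,
    by rintro a b c (rfl | ⟨rfl, rfl⟩ | ⟨rfl, rfl⟩) (h | ⟨h1, h2⟩ | ⟨h1, h2⟩) <;>
      subst_vars <;> tauto⟩⟩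

lemma pairS_rel {x y a b : α} :
    pairS x y a b ↔ (a = b ∨ (a = x ∧ b = y) ∨ (a = y ∧ b = x)) := Iff.rfl

lemma pairS_comm (x y : α) : pairS x y = pairS y x :=
  Setoid.ext fun a b => by rw [pairS_rel, pairS_rel]; tauto

lemma pairS_rel_self (x y : α) : pairS x y x y := Or.inr (Or.inl ⟨rfl, rfl⟩)

lemma pairS_ne_bot {x y : α} (h : x ≠ y) : pairS x y ≠ ⊥ := by
  intro hb
  have h2 := pairS_rel_self x y
  rw [hb] at h2
  exact h h2

lemma pairS_le {P : Setoid α} {x y : α} (h : P x y) : pairS x y ≤ P := by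
  rw [Setoid.le_def]
  rintro a b (rfl | ⟨rfl, rfl⟩ | ⟨rfl, rfl⟩)
  · exact P.refl a
  · exact h
  · exact P.symm h

lemma pairS_eq_cases {x y u v : α} (h : pairS x y = pairS u v) :
    x = y ∨ (x = u ∧ y = v) ∨ (x = v ∧ y = u) := by
  have h2 := pairS_rel_self x y
  rw [h] at h2
  exact h2

lemma eq_bot_of (P : Setoid α) (h : ∀ a b, P a b → a = b) : P = ⊥ :=
  le_antisymm (Setoid.le_def.2 fun {a b} hab => h a b hab) bot_le

lemma exists_pair_of_ne_bot {P : Setoid α} (h : P ≠ ⊥) : ∃ x y, x ≠ y ∧ P x y := by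
  by_contra hc
  push_neg at hc
  exact h (eq_bot_of P fun a b hab => by
    by_contra h'
    exact hc a b h' hab)

lemma cpart_coatom (S : Set α) (Q : Setoid α) (hle : cpart S ≤ Q) :
    Q = cpart S ∨ Q = ⊤ := by
  by_cases h : Q ≤ cpart S
  · exact Or.inl (le_antisymm h hle)
  · right
    have h' : ¬ ∀ x y, Q x y → cpart S x y := fun hh => h (Setoid.le_def.2 fun {x y} => hh x y)
    push_neg at h'
    obtain ⟨a, b, hab, hnab⟩ := h'
    rw [cpart_rel] at hnab
    have main : ∀ a b, Q a b → a ∈ S → b ∉ S → Q = ⊤ := by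
      intro a b hab haS hbS
      apply Setoid.eq_top_iff.2
      intro u v
      have hS : ∀ u, u ∈ S → Q u a := fun u hu =>
        Setoid.le_def.1 hle (cpart_rel.2 (iff_of_true hu haS))
      have hSc : ∀ u, u ∉ S → Q u b := fun u hu =>
        Setoid.le_def.1 hle (cpart_rel.2 (iff_of_false hu hbS))
      by_cases hu : u ∈ S <;> by_cases hv : v ∈ S
      · exact Q.trans (hS u hu) (Q.symm (hS v hv))
      · exact Q.trans (hS u hu) (Q.trans hab (Q.symm (hSc v hv)))
      · exact Q.symm (Q.trans (hS v hv) (Q.trans hab (Q.symm (hSc u hu))))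
      · exact Q.trans (hSc u hu) (Q.symm (hSc v hv))
    have hcases : (a ∈ S ∧ b ∉ S) ∨ (a ∉ S ∧ b ∈ S) := by tauto
    rcases hcases with ⟨h1, h2⟩ | ⟨h1, h2⟩
    · exact main a b hab h1 h2
    · exact main b a (Q.symm hab) h2 h1

lemma cpart_inj {S T : Set α} {z : α} (hS : z ∉ S) (hT : z ∉ T) (h : cpart S = cpart T) :
    S = T := by
  ext a
  have h1 : cpart S a z ↔ cpart T a z := by rw [h]
  rw [cpart_rel, cpart_rel] at h1
  tauto

lemma cpart_ne_top {S : Set α} {z s0 : α} (hz : z ∉ S) (hs : s0 ∈ S) : cpart S ≠ ⊤ := by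
  intro h
  have h2 : cpart S s0 z := by rw [h]; trivial
  exact hz (cpart_rel.1 h2 |>.1 hs)

lemma swap_helper {z x y u v : α} (hxy : x ≠ y) (huv : u ≠ v)
    (h : ∀ a : α, (a = x ∨ a = y) ∧ a ≠ z ↔ (a = u ∨ a = v) ∧ a ≠ z) :
    s(x, y) = s(u, v) := by
  rw [Sym2.eq_iff]
  by_cases hxz : x = z
  · have hy := (h y).1 ⟨Or.inr rfl, fun hyz' => hxy (hxz.trans hyz'.symm)⟩
    by_cases huz : u = z
    · rcases hy.1 with h' | h'
      · exact absurd (h'.trans huz) hy.2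
      · exact Or.inl ⟨hxz.trans huz.symm, h'⟩
    · by_cases hvz : v = z
      · rcases hy.1 with h' | h'
        · exact Or.inr ⟨hxz.trans hvz.symm, h'⟩
        · exact absurd (h'.trans hvz) hy.2
      · have hu := (h u).2 ⟨Or.inl rfl, huz⟩
        have hv := (h v).2 ⟨Or.inr rfl, hvz⟩
        rcases hu.1 with h' | h'
        · exact absurd (h'.trans hxz) hu.2
        rcases hv.1 with h'' | h''
        · exact absurd (h''.trans hxz) hv.2
        exact absurd (h'.trans h''.symm) huv
  · by_cases hyz : y = z
    · have hx := (h x).1 ⟨Or.inl rfl, hxz⟩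
      by_cases huz : u = z
      · rcases hx.1 with h' | h'
        · exact absurd (h'.trans huz) hx.2
        · exact Or.inr ⟨h', hyz.trans huz.symm⟩
      · by_cases hvz : v = z
        · rcases hx.1 with h' | h'
          · exact Or.inl ⟨h', hyz.trans hvz.symm⟩
          · exact absurd (h'.trans hvz) hx.2
        · have hu := (h u).2 ⟨Or.inl rfl, huz⟩
          have hv := (h v).2 ⟨Or.inr rfl, hvz⟩
          rcases hu.1 with h' | h'
          · rcases hv.1 with h'' | h''
            · exact absurd (h'.trans h''.symm) huv
            · exact absurd (h''.trans hyz) hv.2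
          · exact absurd (h'.trans hyz) hu.2
    · have hx := (h x).1 ⟨Or.inl rfl, hxz⟩
      have hy := (h y).1 ⟨Or.inr rfl, hyz⟩
      rcases hx.1 with h1 | h1 <;> rcases hy.1 with h2 | h2
      · exact absurd (h1.trans h2.symm) hxy
      · exact Or.inl ⟨h1, h2⟩
      · exact Or.inr ⟨h1, h2⟩
      · exact absurd (h1.trans h2.symm) hxy

end Stmt19Aux

open Stmt19Aux

/-- For every cardinal κ > 2 (finite or infinite), the partition lattice of κ is not
orthocomplemented: there is no map `P ↦ P⊥` with `P ⊓ P⊥ = ⊥`, `P ⊔ P⊥ = ⊤`,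
`(P ⊓ Q)⊥ = P⊥ ⊔ Q⊥` and `(P⊥)⊥ = P`. -/
theorem stmt_19 {α : Type u} (hα : 2 < Cardinal.mk α) :
    ¬ ∃ oc : Setoid α → Setoid α,
      (∀ P, P ⊓ oc P = ⊥) ∧ (∀ P, P ⊔ oc P = ⊤) ∧
      (∀ P Q, oc (P ⊓ Q) = oc P ⊔ oc Q) ∧ (∀ P, oc (oc P) = P) := by
  classical
  rintro ⟨oc, hmeet, hjoin, hdm, hinv⟩
  have hinj : Function.Injective oc := fun P Q h => by rw [← hinv P, h, hinv]
  have hanti : ∀ P Q : Setoid α, P ≤ Q → oc Q ≤ oc P := by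
    intro P Q h
    have h2 := hdm P Q
    rw [inf_eq_left.mpr h] at h2
    rw [h2]
    exact le_sup_right
  have htop : oc ⊥ = ⊤ := by have h := hjoin ⊥; rwa [bot_sup_eq] at h
  have hbot : oc ⊤ = ⊥ := by have h := hmeet ⊤; rwa [top_inf_eq] at h
  -- Key: the orthocomplement of a proper two-block partition is an atom.
  have key : ∀ (S : Set α) (w : α), w ∉ S → S.Nonempty →
      ∃ x y, x ≠ y ∧ oc (cpart S) = pairS x y := by
    intro S w hw ⟨s0, hs⟩
    have hne_top : cpart S ≠ ⊤ := cpart_ne_top hw hs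
    have hne_bot : oc (cpart S) ≠ ⊥ := by
      intro h
      apply hne_top
      rw [← hinv (cpart S), h, htop]
    obtain ⟨x, y, hxy, hr⟩ := exists_pair_of_ne_bot hne_bot
    have hle : pairS x y ≤ oc (cpart S) := pairS_le hr
    have h2 : cpart S ≤ oc (pairS x y) := by
      have h3 := hanti _ _ hle
      rwa [hinv] at h3
    rcases cpart_coatom S _ h2 with h | h
    · refine ⟨x, y, hxy, ?_⟩
      rw [← h, hinv]
    · exfalso
      apply pairS_ne_bot hxy
      rw [← hinv (pairS x y), h, hbot]
  by_cases hfin : Finite α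
  · -- FINITE CASE
    letI := Fintype.ofFinite α
    have hcard : 2 < Fintype.card α := by
      rw [Cardinal.mk_fintype] at hα
      exact_mod_cast hα
    rcases Nat.lt_or_ge (Fintype.card α) 4 with h4 | h4
    · -- |α| = 3 : parity-type argument on the three atoms
      have h3 : Fintype.card α = 3 := by omega
      have huniv3 : (Finset.univ : Finset α).card = 3 := by
        rw [Finset.card_univ]; exact h3
      obtain ⟨x, y, z, hxy, hxz, hyz, huniv⟩ := Finset.card_eq_three.1 huniv3
      have hall : ∀ a : α, a = x ∨ a = y ∨ a = z := by
        intro a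
        have ha : a ∈ ({x, y, z} : Finset α) := huniv ▸ Finset.mem_univ a
        simpa using ha
      have hc1 : cpart ({x} : Set α) = pairS y z := Setoid.ext fun a b => by
        rw [cpart_rel, pairS_rel]
        rcases hall a with rfl | rfl | rfl <;> rcases hall b with rfl | rfl | rfl <;>
          simp [hxy, hxz, hyz, Ne.symm hxy, Ne.symm hxz, Ne.symm hyz]
      have hc2 : cpart ({y} : Set α) = pairS x z := Setoid.ext fun a b => by
        rw [cpart_rel, pairS_rel]
        rcases hall a with rfl | rfl | rfl <;> rcases hall b with rfl | rfl | rfl <;>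
          simp [hxy, hxz, hyz, Ne.symm hxy, Ne.symm hxz, Ne.symm hyz]
      have hc3 : cpart ({z} : Set α) = pairS x y := Setoid.ext fun a b => by
        rw [cpart_rel, pairS_rel]
        rcases hall a with rfl | rfl | rfl <;> rcases hall b with rfl | rfl | rfl <;>
          simp [hxy, hxz, hyz, Ne.symm hxy, Ne.symm hxz, Ne.symm hyz]
      have hclass : ∀ u v : α, u ≠ v →
          pairS u v = pairS y z ∨ pairS u v = pairS x z ∨ pairS u v = pairS x y := by
        intro u v huv
        rcases hall u with rfl | rfl | rfl <;> rcases hall v with rfl | rfl | rfl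
        · exact absurd rfl huv
        · exact Or.inr (Or.inr rfl)
        · exact Or.inr (Or.inl rfl)
        · exact Or.inr (Or.inr (pairS_comm _ _))
        · exact absurd rfl huv
        · exact Or.inl rfl
        · exact Or.inr (Or.inl (pairS_comm _ _))
        · exact Or.inl (pairS_comm _ _)
        · exact absurd rfl huv
      have hatom : ∀ (S : Set α) (w : α), w ∉ S → S.Nonempty →
          oc (cpart S) = pairS y z ∨ oc (cpart S) = pairS x z ∨ oc (cpart S) = pairS x y := by
        intro S w hw hs
        obtain ⟨u, v, huv, he⟩ := key S w hw hs
        rw [he]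
        exact hclass u v huv
      have h1 := hatom {x} y (by simp [Ne.symm hxy]) ⟨x, rfl⟩
      rw [hc1] at h1
      have h2' := hatom {y} x (by simp [hxy]) ⟨y, rfl⟩
      rw [hc2] at h2'
      have h3' := hatom {z} x (by simp [hxz]) ⟨z, rfl⟩
      rw [hc3] at h3'
      have hfix : ∀ P : Setoid α, P ≠ ⊥ → oc P ≠ P := by
        intro P hP h
        apply hP
        have hm := hmeet P
        rwa [h, inf_idem] at hm
      have d12 : pairS y z ≠ pairS x z := by
        intro h
        rcases pairS_eq_cases h with h' | ⟨h', _⟩ | ⟨h', _⟩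
        · exact hyz h'
        · exact hxy h'.symm
        · exact hyz h'
      have d13 : pairS y z ≠ pairS x y := by
        intro h
        rcases pairS_eq_cases h with h' | ⟨h', _⟩ | ⟨_, h'⟩
        · exact hyz h'
        · exact hxy h'.symm
        · exact hxz h'.symm
      have d23 : pairS x z ≠ pairS x y := by
        intro h
        rcases pairS_eq_cases h with h' | ⟨_, h'⟩ | ⟨h', _⟩
        · exact hxz h'
        · exact hyz h'.symm
        · exact hxy h'
      have nb1 : pairS y z ≠ ⊥ := pairS_ne_bot hyz
      have nb2 : pairS x z ≠ ⊥ := pairS_ne_bot hxz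
      have nb3 : pairS x y ≠ ⊥ := pairS_ne_bot hxy
      rcases h1 with e | e | e
      · exact hfix _ nb1 e
      · -- oc A1 = A2, hence oc A2 = A1
        have e2 : oc (pairS x z) = pairS y z := by rw [← e, hinv]
        rcases h3' with e3 | e3 | e3
        · exact d23 (hinj (e3.trans e2.symm)).symm
        · exact d13 (hinj (e3.trans e.symm)).symm
        · exact hfix _ nb3 e3
      · -- oc A1 = A3, hence oc A3 = A1
        have e2 : oc (pairS x y) = pairS y z := by rw [← e, hinv]
        rcases h2' with e3 | e3 | e3
        · exact d23 (hinj (e3.trans e2.symm))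
        · exact hfix _ nb2 e3
        · exact d12 (hinj (e3.trans e.symm)).symm
    · -- |α| ≥ 4 : counting argument
      obtain ⟨z⟩ : Nonempty α := Fintype.card_pos_iff.1 (by omega)
      have hkey : ∀ T : {T : Finset α // z ∉ T ∧ T.Nonempty},
          ∃ x y, x ≠ y ∧ oc (cpart (↑T.1 : Set α)) = pairS x y := fun T =>
        key _ z (by simpa using T.2.1) (by exact_mod_cast T.2.2)
      choose f g hfg hfg2 using hkey
      have hΦinj : Function.Injective
          (fun T : {T : Finset α // z ∉ T ∧ T.Nonempty} =>
            (⟨s(f T, g T), by rw [Sym2.mk_isDiag_iff]; exact hfg T⟩ :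
              {p : Sym2 α // ¬ p.IsDiag})) := by
        intro T T' h
        have h' : s(f T, g T) = s(f T', g T') := congrArg Subtype.val h
        rw [Sym2.eq_iff] at h'
        have hpair : pairS (f T) (g T) = pairS (f T') (g T') := by
          rcases h' with ⟨h1, h2⟩ | ⟨h1, h2⟩
          · rw [h1, h2]
          · rw [h1, h2, pairS_comm]
        have hc : cpart (↑T.1 : Set α) = cpart (↑T'.1 : Set α) :=
          hinj (by rw [hfg2, hpair, ← hfg2])
        have hset : (↑T.1 : Set α) = ↑T'.1 :=
          cpart_inj (by simpa using T.2.1) (by simpa using T'.2.1) hc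
        exact Subtype.ext (Finset.coe_injective hset)
      set ψ : Sym2 α → Finset α :=
        Sym2.lift ⟨fun a b => ({a, b} : Finset α) \ {z},
          fun a b => by simp only [Finset.pair_comm a b]⟩ with hψ
      have hψok : ∀ p : Sym2 α, ¬ p.IsDiag → z ∉ ψ p ∧ (ψ p).Nonempty := by
        intro p
        induction p using Sym2.inductionOn with
        | _ a b =>
          intro hd
          rw [Sym2.mk_isDiag_iff] at hd
          constructor
          · simp [hψ]
          · by_cases haz : a = z
            · refine ⟨b, ?_⟩
              have hbz : b ≠ z := fun hbz => hd (haz.trans hbz.symm)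
              simp [hψ, hbz]
            · exact ⟨a, by simp [hψ, haz]⟩
      have hψinj : ∀ p q : Sym2 α, ¬p.IsDiag → ¬q.IsDiag → ψ p = ψ q → p = q := by
        intro p q
        induction p using Sym2.inductionOn with
        | _ a b =>
          induction q using Sym2.inductionOn with
          | _ u v =>
            intro hp hq h'
            rw [Sym2.mk_isDiag_iff] at hp hq
            apply swap_helper hp hq
            intro c
            have hc := Finset.ext_iff.1 h' c
            simpa [hψ] using hc
      have hΨinj : Function.Injective
          (fun p : {p : Sym2 α // ¬ p.IsDiag} =>
            (⟨ψ p.1, hψok p.1 p.2⟩ : {T : Finset α // z ∉ T ∧ T.Nonempty})) := fun p q h =>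
        Subtype.ext (hψinj p.1 q.1 p.2 q.2 (congrArg Subtype.val h))
      have hcomp : Function.Injective
          ((fun p : {p : Sym2 α // ¬ p.IsDiag} =>
            (⟨ψ p.1, hψok p.1 p.2⟩ : {T : Finset α // z ∉ T ∧ T.Nonempty})) ∘
          (fun T : {T : Finset α // z ∉ T ∧ T.Nonempty} =>
            (⟨s(f T, g T), by rw [Sym2.mk_isDiag_iff]; exact hfg T⟩ :
              {p : Sym2 α // ¬ p.IsDiag}))) :=
        hΨinj.comp hΦinj
      have hsurj := Finite.injective_iff_surjective.1 hcomp
      have hz3 : 3 ≤ (Finset.univ.erase z).card := by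
        rw [Finset.card_erase_of_mem (Finset.mem_univ z), Finset.card_univ]
        omega
      obtain ⟨T₀, hT₀sub, hT₀card⟩ := Finset.exists_subset_card_eq hz3
      have hzT₀ : z ∉ T₀ := fun h => (Finset.mem_erase.1 (hT₀sub h)).1 rfl
      have hT₀ne : T₀.Nonempty := Finset.card_pos.1 (by omega)
      obtain ⟨p, hp⟩ := hsurj ⟨T₀, hzT₀, hT₀ne⟩
      have hcard2 : ∀ q : Sym2 α, (ψ q).card ≤ 2 := by
        intro q
        induction q using Sym2.inductionOn with
        | _ a b =>
          calc (ψ s(a, b)).card ≤ ({a, b} : Finset α).card :=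
                Finset.card_le_card (by simp [hψ])
          _ ≤ 2 := (Finset.card_insert_le _ _).trans (by simp)
      have hval : ψ (s(f p, g p)) = T₀ := congrArg Subtype.val hp
      have h32 : (3 : ℕ) ≤ 2 := by
        calc (3 : ℕ) = T₀.card := hT₀card.symm
        _ = (ψ s(f p, g p)).card := by rw [hval]
        _ ≤ 2 := hcard2 _
      omega
  · -- INFINITE CASE
    rw [not_finite_iff_infinite] at hfin
    obtain ⟨z⟩ : Nonempty α := inferInstance
    set β := {x : α // x ≠ z} with hβdef
    have himg : ∀ T : Set β, z ∉ Subtype.val '' T := by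
      rintro T ⟨b, _, hbz⟩
      exact b.2 hbz
    have hkey : ∀ T : {T : Set β // T.Nonempty},
        ∃ x y, x ≠ y ∧ oc (cpart (Subtype.val '' T.1)) = pairS x y := fun T =>
      key _ z (himg T.1) (T.2.image _)
    choose f g hfg hfg2 using hkey
    have hGinj : Function.Injective (fun T : Set β =>
        (if h : T.Nonempty then Sum.inl s(f ⟨T, h⟩, g ⟨T, h⟩)
         else Sum.inr PUnit.unit : Sym2 α ⊕ PUnit.{u+1})) := by
      intro T T' h
      by_cases h1 : T.Nonempty <;> by_cases h2 : T'.Nonempty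
      · simp only [dif_pos h1, dif_pos h2, Sum.inl.injEq] at h
        rw [Sym2.eq_iff] at h
        have hpair : pairS (f ⟨T, h1⟩) (g ⟨T, h1⟩) = pairS (f ⟨T', h2⟩) (g ⟨T', h2⟩) := by
          rcases h with ⟨e1, e2⟩ | ⟨e1, e2⟩
          · rw [e1, e2]
          · rw [e1, e2, pairS_comm]
        have hc : cpart (Subtype.val '' T) = cpart (Subtype.val '' T') :=
          hinj (by rw [hfg2 ⟨T, h1⟩, hpair, ← hfg2 ⟨T', h2⟩])
        have hset : Subtype.val '' T = Subtype.val '' T' :=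
          cpart_inj (himg T) (himg T') hc
        exact Set.image_injective.2 Subtype.val_injective hset
      · simp only [dif_pos h1, dif_neg h2] at h
        exact absurd h (by simp)
      · simp only [dif_neg h1, dif_pos h2] at h
        exact absurd h (by simp)
      · rw [Set.not_nonempty_iff_eq_empty] at h1 h2
        rw [h1, h2]
    haveI : Infinite β := by
      have hcompl : ({z}ᶜ : Set α).Infinite :=
        Set.Finite.infinite_compl (Set.finite_singleton z)
      haveI := hcompl.to_subtype
      exact Infinite.of_injective (fun x : ↥({z}ᶜ : Set α) => (⟨x.1, x.2⟩ : β))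
        (fun a b hab => Subtype.ext (congrArg Subtype.val hab))
    have hβ : ℵ₀ ≤ #β := Cardinal.aleph0_le_mk β
    have hβ1 : #β + 1 = #β := by
      rw [Cardinal.add_eq_max hβ, max_eq_left (Cardinal.one_lt_aleph0.le.trans hβ)]
    have hαβ : #α ≤ #β := by
      have hi : Function.Injective (fun a : α =>
          (if h : a = z then Sum.inr PUnit.unit else Sum.inl ⟨a, h⟩ : β ⊕ PUnit.{u+1})) := by
        intro a b h
        by_cases ha : a = z <;> by_cases hb : b = z
        · rw [ha, hb]
        · simp only [dif_pos ha, dif_neg hb] at h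
          exact absurd h (by simp)
        · simp only [dif_neg ha, dif_pos hb] at h
          exact absurd h (by simp)
        · simp only [dif_neg ha, dif_neg hb, Sum.inl.injEq] at h
          exact congrArg Subtype.val h
      calc #α ≤ #(β ⊕ PUnit.{u+1}) := Cardinal.mk_le_of_injective hi
      _ = #β + 1 := by
          rw [Cardinal.mk_sum, Cardinal.mk_punit, Cardinal.lift_id, Cardinal.lift_one]
      _ = #β := hβ1
    have hsym : #(Sym2 α) ≤ #α * #α := by
      have hs : Function.Surjective (Sym2.mk (α := α)).uncurry := Sym2.mk_surjective
      calc #(Sym2 α) ≤ #(α × α) := Cardinal.mk_le_of_surjective hs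
      _ = #α * #α := by simp [Cardinal.mk_prod]
    have hfinal : (2 : Cardinal) ^ #β ≤ #β := by
      calc (2 : Cardinal) ^ #β = #(Set β) := Cardinal.mk_set.symm
      _ ≤ #(Sym2 α ⊕ PUnit.{u+1}) := Cardinal.mk_le_of_injective hGinj
      _ = #(Sym2 α) + 1 := by
          rw [Cardinal.mk_sum, Cardinal.mk_punit, Cardinal.lift_id, Cardinal.lift_one]
      _ ≤ #α * #α + 1 := add_le_add hsym le_rfl
      _ ≤ #β * #β + 1 := add_le_add (mul_le_mul' hαβ hαβ) le_rfl
      _ = #β + 1 := by rw [Cardinal.mul_eq_self hβ]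
      _ = #β := hβ1
    exact absurd hfinal (not_le.2 (Cardinal.cantor _))
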